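/- For every u ∈ 𝕍, the operator T_u has at most one fixed point in 𝕍: if v, ṽ ∈ 𝕍 satisfy T_u v = v and T_u ṽ = ṽ, then v = ṽ. -/

import Mathlib

open Filter Topology MeasureTheory

/-- `A₂ = d(d+2)`. -/
noncomputable def A2 (d : ℕ) : ℝ := (d : ℝ) * ((d : ℝ) + 2)

/-- `A₃ = (1/4)·d·(d+2)²·q²`. -/
noncomputable def A3 (d : ℕ) (q : ℝ) : ℝ := (1/4) * (d : ℝ) * ((d : ℝ) + 2)^2 * q^2

/-- The fundamental matrix `Φ(t,s)` of the linear system. -/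
noncomputable def Phi (d : ℕ) (t s : ℝ) : Matrix (Fin 4) (Fin 4) ℝ :=
  !![1, (A2 d / (2 * (d : ℝ))) * (Real.exp (-2*(t-s)) - 1), 0, 0;
     0, Real.exp (-2*(t-s)), 0, 0;
     0, 0, Real.exp (-2*(t-s)), 0;
     0, 0, 0, Real.exp (-2*(t-s))]

/-- The nonlinearity `b : ℝ⁴ → ℝ⁴`. -/
noncomputable def bfun (d : ℕ) (q : ℝ) (v : Fin 4 → ℝ) : Fin 4 → ℝ :=
  ![ -(v 0) * ((d : ℝ) * (v 0)^2 + (v 2)^2 - 2 * v 2) + (2 * A3 d q / (d : ℝ)) * (v 3)^2,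
     -2 * v 1 * ((d : ℝ) * (v 0)^2 - v 0 + (v 2)^2 - 2 * v 2),
     -(v 2) * ((d : ℝ) * (v 0)^2 + (v 2)^2 - 3 * v 2) + (d : ℝ) * (v 0)^2 + A3 d q * (v 3)^2,
     -(v 3) * ((d : ℝ) * (v 0)^2 - 2 * v 0 + (v 2)^2 - 3 * v 2) ]

/-- The nonlinear integral operator `T_u v(t) = u(t) - ∫_t^∞ Φ(t,s) b(v(s)) ds`. -/
noncomputable def Tmap (d : ℕ) (q : ℝ) (u v : ℝ → Fin 4 → ℝ) : ℝ → Fin 4 → ℝ :=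
  fun t => u t - ∫ s in Set.Ioi t, (Phi d t s).mulVec (bfun d q (v s))

/-- Membership in the Banach space `𝕍`: continuity on `[0,∞)` and finiteness of the
weighted sup norm `sup_{t ≥ 0} e^{2t}|v(t)|`. -/
def memV (v : ℝ → Fin 4 → ℝ) : Prop :=
  ContinuousOn v (Set.Ici 0) ∧ ∃ M : ℝ, ∀ t ≥ (0:ℝ), Real.exp (2*t) * ‖v t‖ ≤ M

/-- The weighted sup norm `‖v‖ = sup_{t ≥ 0} e^{2t}|v(t)|`. -/
noncomputable def Vnorm (v : ℝ → Fin 4 → ℝ) : ℝ :=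
  ⨆ t : Set.Ici (0:ℝ), Real.exp (2 * (t : ℝ)) * ‖v (t : ℝ)‖

/-- Membership in the closed ball `B̄_r(u) = {v ∈ 𝕍 : ‖v - u‖ ≤ r}`. -/
def inBall (r : ℝ) (u v : ℝ → Fin 4 → ℝ) : Prop :=
  memV v ∧ ∀ t ≥ (0:ℝ), Real.exp (2*t) * ‖v t - u t‖ ≤ r

/-- The initial vector `u₀ = ((A₂/(2d))y₀, y₀, z₀, w₀)`. -/
noncomputable def uZero (d : ℕ) (y0 z0 w0 : ℝ) : Fin 4 → ℝ :=
  ![A2 d / (2 * (d : ℝ)) * y0, y0, z0, w0]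

/-- The solution `u(t) = Φ(t,0)u₀ = e^{-2t} u₀` of the linear system. -/
noncomputable def ufun (d : ℕ) (y0 z0 w0 : ℝ) : ℝ → Fin 4 → ℝ :=
  fun t => Real.exp (-2*t) • uZero d y0 z0 w0

/-- An (entrywise sup) norm on 4×4 matrices. -/
noncomputable def matNorm (M : Matrix (Fin 4) (Fin 4) ℝ) : ℝ := ⨆ i, ⨆ j, |M i j|

section Aux

lemma prod2_diff {a a' b b' R δ : ℝ} (ha : |a| ≤ R) (hb' : |b'| ≤ R)
    (h1 : |a - a'| ≤ δ) (h2 : |b - b'| ≤ δ) : |a*b - a'*b'| ≤ 2*R*δ := by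
  have e : a*b - a'*b' = a*(b-b') + (a-a')*b' := by ring
  calc |a*b - a'*b'| ≤ |a| * |b-b'| + |a-a'| * |b'| := by
        rw [e]; exact (abs_add_le _ _).trans (by rw [abs_mul, abs_mul])
    _ ≤ 2*R*δ := by nlinarith [abs_nonneg a, abs_nonneg (b-b'), abs_nonneg (a-a'), abs_nonneg b']

lemma prod3_diff {a a' b b' c c' R δ : ℝ} (ha : |a| ≤ R) (ha' : |a'| ≤ R) (hb : |b| ≤ R)
    (hb' : |b'| ≤ R) (hc : |c| ≤ R) (h1 : |a - a'| ≤ δ) (h2 : |b - b'| ≤ δ)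
    (h3 : |c - c'| ≤ δ) : |a*b*c - a'*b'*c'| ≤ 3*R^2*δ := by
  have e : a*b*c - a'*b'*c' = (a-a')*(b*c) + a'*((b-b')*c) + (a'*b')*(c-c') := by ring
  have habs : |a*b*c - a'*b'*c'| ≤ |a-a'| *(|b| * |c|) + |a'| *(|b-b'| * |c|) + (|a'| * |b'|)* |c-c'| := by
    rw [e]
    refine (abs_add_le _ _).trans ?_
    have := abs_add_le ((a-a')*(b*c)) (a'*((b-b')*c))
    calc |(a-a')*(b*c) + a'*((b-b')*c)| + |(a'*b')*(c-c')|
        ≤ (|(a-a')*(b*c)| + |a'*((b-b')*c)|) + |(a'*b')*(c-c')| := by gcongr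
      _ = |a-a'| *(|b| * |c|) + |a'| *(|b-b'| * |c|) + (|a'| * |b'|)* |c-c'| := by
          simp [abs_mul]
  refine habs.trans ?_
  have hR : 0 ≤ R := (abs_nonneg a).trans ha
  have hδ : 0 ≤ δ := (abs_nonneg (a-a')).trans h1
  have t1 : |a-a'| * (|b| * |c|) ≤ δ * (R*R) :=
    mul_le_mul h1 (mul_le_mul hb hc (abs_nonneg c) hR) (by positivity) hδ
  have t2 : |a'| * (|b-b'| * |c|) ≤ R * (δ*R) :=
    mul_le_mul ha' (mul_le_mul h2 hc (abs_nonneg c) hδ) (by positivity) hR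
  have t3 : |a'| * |b'| * |c-c'| ≤ R*R*δ :=
    mul_le_mul (mul_le_mul ha' hb' (abs_nonneg b') hR) h3 (abs_nonneg _) (by positivity)
  nlinarith [t1, t2, t3]

lemma abs_comb5 (k1 k2 k3 k4 k5 P1 P2 P3 P4 P5 B1 B2 B3 B4 B5 : ℝ)
    (h1 : |P1| ≤ B1) (h2 : |P2| ≤ B2) (h3 : |P3| ≤ B3) (h4 : |P4| ≤ B4) (h5 : |P5| ≤ B5) :
    |k1*P1 + k2*P2 + k3*P3 + k4*P4 + k5*P5| ≤ |k1| *B1 + |k2| *B2 + |k3| *B3 + |k4| *B4 + |k5| *B5 := by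
  calc |k1*P1 + k2*P2 + k3*P3 + k4*P4 + k5*P5|
      ≤ |k1*P1| + |k2*P2| + |k3*P3| + |k4*P4| + |k5*P5| := by
        refine (abs_add_le _ _).trans ?_
        gcongr
        refine (abs_add_le _ _).trans ?_
        gcongr
        refine (abs_add_le _ _).trans ?_
        gcongr
        exact abs_add_le _ _
    _ ≤ |k1| *B1 + |k2| *B2 + |k3| *B3 + |k4| *B4 + |k5| *B5 := by
        simp only [abs_mul]; gcongr

lemma pi_abs_le_norm (x : Fin 4 → ℝ) (i : Fin 4) : |x i| ≤ ‖x‖ := by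
  rw [← Real.norm_eq_abs]; exact norm_le_pi_norm x i

lemma pi_norm_le' (x : Fin 4 → ℝ) {C : ℝ} (h0 : 0 ≤ C) (h : ∀ i, |x i| ≤ C) : ‖x‖ ≤ C := by
  rw [pi_norm_le_iff_of_nonneg h0]; intro i; rw [Real.norm_eq_abs]; exact h i

lemma bfun_lip (d : ℕ) (q : ℝ) (x y : Fin 4 → ℝ) (R : ℝ) (hx : ‖x‖ ≤ R) (hy : ‖y‖ ≤ R) :
    ‖bfun d q x - bfun d q y‖ ≤
      (6*(d:ℝ) + 3*|A3 d q| + 3*|2 * A3 d q / (d:ℝ)| + 24) * (R^2+R) * ‖x - y‖ := by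
  have hR : 0 ≤ R := le_trans (norm_nonneg x) hx
  have hδ : 0 ≤ ‖x - y‖ := norm_nonneg _
  set δ := ‖x - y‖ with hδdef
  set D := (d:ℝ) with hDdef
  have hD : 0 ≤ D := Nat.cast_nonneg d
  set A := A3 d q with hAdef
  set c := 2 * A3 d q / (d:ℝ) with hcdef
  set L := 6*D + 3*|A| + 3*|c| + 24 with hLdef
  have hxi : ∀ i, |x i| ≤ R := fun i => (pi_abs_le_norm x i).trans hx
  have hyi : ∀ i, |y i| ≤ R := fun i => (pi_abs_le_norm y i).trans hy
  have hdi : ∀ i, |x i - y i| ≤ δ := fun i => by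
    simpa using pi_abs_le_norm (x - y) i
  have hB : (0:ℝ) ≤ 3*(R^2+R)*δ := by positivity
  have B3 : ∀ i j k : Fin 4, |x i * x j * x k - y i * y j * y k| ≤ 3*(R^2+R)*δ := by
    intro i j k
    refine (prod3_diff (hxi i) (hyi i) (hxi j) (hyi j) (hxi k) (hdi i) (hdi j) (hdi k)).trans ?_
    nlinarith
  have B2 : ∀ i j : Fin 4, |x i * x j - y i * y j| ≤ 3*(R^2+R)*δ := by
    intro i j
    refine (prod2_diff (hxi i) (hyi j) (hdi i) (hdi j)).trans ?_
    nlinarith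
  have B0 : |(0:ℝ)| ≤ 3*(R^2+R)*δ := by simpa using hB
  have hLnn : 0 ≤ L := by positivity
  apply pi_norm_le' _ (by positivity)
  intro i
  have hcnn := abs_nonneg c
  have hAnn := abs_nonneg A
  fin_cases i
  · have key : ∀ z : ℝ, z = (-D)*(x 0 * x 0 * x 0 - y 0 * y 0 * y 0)
        + (-1)*(x 0 * x 2 * x 2 - y 0 * y 2 * y 2) + 2*(x 0 * x 2 - y 0 * y 2)
        + c*(x 3 * x 3 - y 3 * y 3) + 0*(0:ℝ) → |z| ≤ L*(R^2+R)*δ := by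
      intro z hz
      rw [hz]
      refine (abs_comb5 _ _ _ _ _ _ _ _ _ _ _ _ _ _ _ (B3 0 0 0) (B3 0 2 2) (B2 0 2) (B2 3 3) B0).trans ?_
      rw [abs_neg, abs_of_nonneg hD]
      norm_num
      nlinarith
    exact key _ (by simp [bfun, ← hcdef, ← hDdef]; ring)
  · have key : ∀ z : ℝ, z = (-2*D)*(x 1 * x 0 * x 0 - y 1 * y 0 * y 0)
        + 2*(x 1 * x 0 - y 1 * y 0) + (-2)*(x 1 * x 2 * x 2 - y 1 * y 2 * y 2)
        + 4*(x 1 * x 2 - y 1 * y 2) + 0*(0:ℝ) → |z| ≤ L*(R^2+R)*δ := by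
      intro z hz
      rw [hz]
      refine (abs_comb5 _ _ _ _ _ _ _ _ _ _ _ _ _ _ _ (B3 1 0 0) (B2 1 0) (B3 1 2 2) (B2 1 2) B0).trans ?_
      rw [show |(-2*D)| = 2*D by rw [abs_of_nonpos (by linarith), neg_mul]; ring]
      norm_num
      nlinarith
    exact key _ (by simp [bfun, ← hDdef]; ring)
  · have key : ∀ z : ℝ, z = (-D)*(x 2 * x 0 * x 0 - y 2 * y 0 * y 0)
        + (-1)*(x 2 * x 2 * x 2 - y 2 * y 2 * y 2) + 3*(x 2 * x 2 - y 2 * y 2)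
        + D*(x 0 * x 0 - y 0 * y 0) + A*(x 3 * x 3 - y 3 * y 3) → |z| ≤ L*(R^2+R)*δ := by
      intro z hz
      rw [hz]
      refine (abs_comb5 _ _ _ _ _ _ _ _ _ _ _ _ _ _ _ (B3 2 0 0) (B3 2 2 2) (B2 2 2) (B2 0 0) (B2 3 3)).trans ?_
      rw [abs_neg, abs_of_nonneg hD]
      norm_num
      nlinarith
    exact key _ (by simp [bfun, ← hAdef, ← hDdef]; ring)
  · have key : ∀ z : ℝ, z = (-D)*(x 3 * x 0 * x 0 - y 3 * y 0 * y 0)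
        + 2*(x 3 * x 0 - y 3 * y 0) + (-1)*(x 3 * x 2 * x 2 - y 3 * y 2 * y 2)
        + 3*(x 3 * x 2 - y 3 * y 2) + 0*(0:ℝ) → |z| ≤ L*(R^2+R)*δ := by
      intro z hz
      rw [hz]
      refine (abs_comb5 _ _ _ _ _ _ _ _ _ _ _ _ _ _ _ (B3 3 0 0) (B2 3 0) (B3 3 2 2) (B2 3 2) B0).trans ?_
      rw [abs_neg, abs_of_nonneg hD]
      norm_num
      nlinarith
    exact key _ (by simp [bfun, ← hDdef]; ring)

lemma bfun_cont (d : ℕ) (q : ℝ) : Continuous (bfun d q) := by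
  apply continuous_pi; intro i; fin_cases i <;> simp [bfun] <;> fun_prop

lemma bfun_zero (d : ℕ) (q : ℝ) : bfun d q 0 = 0 := by
  funext i; fin_cases i <;> simp [bfun]

lemma integral_exp_neg_mul_Ioi {b : ℝ} (a : ℝ) (hb : 0 < b) :
    ∫ s in Set.Ioi a, Real.exp (-(b*s)) = Real.exp (-(b*a))/b := by
  have h := integral_Ioi_of_hasDerivAt_of_tendsto' (f := fun s => -Real.exp (-(b*s))/b)
    (f' := fun s => Real.exp (-(b*s))) (a := a) (m := 0) ?_ ?_ ?_
  · rw [h]; ring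
  · intro x _
    have h1 : HasDerivAt (fun s => -(b*s)) (-b) x := by
      simpa using ((hasDerivAt_id x).const_mul (-b))
    have := (h1.exp).neg.div_const b
    exact this.congr_deriv (by field_simp)
  · simpa using exp_neg_integrableOn_Ioi a hb
  · have h2 : Filter.Tendsto (fun s => -(b*s)) Filter.atTop Filter.atBot := by
      apply tendsto_neg_atBot_iff.mpr
      exact Filter.Tendsto.const_mul_atTop hb Filter.tendsto_id
    have := (Real.tendsto_exp_atBot.comp h2).neg.div_const b
    simpa using this

lemma phi_entry (d : ℕ) (hd0 : (d:ℝ) ≠ 0) (t s : ℝ) (x : Fin 4 → ℝ) :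
    ((Phi d t s).mulVec x) 0 = x 0 + (((d:ℝ)+2)/2) * (Real.exp (-2*(t-s)) - 1) * x 1 ∧
    ((Phi d t s).mulVec x) 1 = Real.exp (-2*(t-s)) * x 1 ∧
    ((Phi d t s).mulVec x) 2 = Real.exp (-2*(t-s)) * x 2 ∧
    ((Phi d t s).mulVec x) 3 = Real.exp (-2*(t-s)) * x 3 := by
  have hc : A2 d / (2 * (d:ℝ)) = ((d:ℝ)+2)/2 := by
    rw [A2]; field_simp
  refine ⟨?_, ?_, ?_, ?_⟩ <;>
    simp only [Phi, Matrix.mulVec, dotProduct, Fin.sum_univ_four,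
      Matrix.cons_val', Matrix.cons_val_zero, Matrix.cons_val_one, Matrix.head_cons,
      Matrix.empty_val', Matrix.cons_val_fin_one, Matrix.head_fin_const,
      Matrix.cons_val_two, Matrix.cons_val_three, Matrix.tail_cons, Matrix.of_apply, hc] <;>
    ring

lemma phi_mulVec_bound (d : ℕ) (hd : 2 ≤ d) (t s : ℝ) (hts : t ≤ s) (x : Fin 4 → ℝ) :
    ‖(Phi d t s).mulVec x‖ ≤ ((d:ℝ)+3) * Real.exp (2*(s-t)) * ‖x‖ := by
  have hD : (2:ℝ) ≤ (d:ℝ) := by exact_mod_cast hd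
  have hd0 : (d:ℝ) ≠ 0 := by positivity
  have hE1 : 1 ≤ Real.exp (-2*(t-s)) := by
    rw [Real.one_le_exp_iff]; nlinarith
  have hEeq : Real.exp (2*(s-t)) = Real.exp (-2*(t-s)) := by ring_nf
  have hxn : 0 ≤ ‖x‖ := norm_nonneg x
  have hxi : ∀ i, |x i| ≤ ‖x‖ := fun i => pi_abs_le_norm x i
  obtain ⟨e0, e1, e2, e3⟩ := phi_entry d hd0 t s x
  have hE0 : (0:ℝ) ≤ Real.exp (-2*(t-s)) := by linarith
  rw [hEeq]
  apply pi_norm_le' _ (by positivity)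
  intro i
  fin_cases i
  · show |(Phi d t s).mulVec x 0| ≤ ((d:ℝ)+3) * Real.exp (-2*(t-s)) * ‖x‖
    rw [e0]
    refine (abs_add_le _ _).trans ?_
    rw [abs_mul, abs_mul]
    rw [abs_of_nonneg (by linarith : (0:ℝ) ≤ ((d:ℝ)+2)/2),
      abs_of_nonneg (by linarith : (0:ℝ) ≤ Real.exp (-2*(t-s)) - 1)]
    have hbr : 0 ≤ ‖x‖ * (((d:ℝ)+3)*Real.exp (-2*(t-s)) - 1 - ((d:ℝ)+2)/2*(Real.exp (-2*(t-s))-1)) :=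
      mul_nonneg hxn (by nlinarith [mul_nonneg (by linarith : (0:ℝ) ≤ (d:ℝ)+4) hE0])
    have h1 := hxi 0
    have h2 := mul_le_mul_of_nonneg_left (hxi 1)
      (by nlinarith : (0:ℝ) ≤ ((d:ℝ)+2)/2*(Real.exp (-2*(t-s))-1))
    nlinarith [h1, h2, hbr]
  · show |(Phi d t s).mulVec x 1| ≤ ((d:ℝ)+3) * Real.exp (-2*(t-s)) * ‖x‖
    rw [e1, abs_mul, abs_of_nonneg (by linarith : (0:ℝ) ≤ Real.exp (-2*(t-s)))]
    nlinarith [mul_le_mul_of_nonneg_left (hxi 1) hE0, mul_nonneg hE0 hxn, hD]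
  · show |(Phi d t s).mulVec x 2| ≤ ((d:ℝ)+3) * Real.exp (-2*(t-s)) * ‖x‖
    rw [e2, abs_mul, abs_of_nonneg (by linarith : (0:ℝ) ≤ Real.exp (-2*(t-s)))]
    nlinarith [mul_le_mul_of_nonneg_left (hxi 2) hE0, mul_nonneg hE0 hxn, hD]
  · show |(Phi d t s).mulVec x 3| ≤ ((d:ℝ)+3) * Real.exp (-2*(t-s)) * ‖x‖
    rw [e3, abs_mul, abs_of_nonneg (by linarith : (0:ℝ) ≤ Real.exp (-2*(t-s)))]
    nlinarith [mul_le_mul_of_nonneg_left (hxi 3) hE0, mul_nonneg hE0 hxn, hD]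

lemma decay_of_bound {v : ℝ → Fin 4 → ℝ} {M : ℝ}
    (h : ∀ t ≥ (0:ℝ), Real.exp (2*t) * ‖v t‖ ≤ M) :
    ∀ s ≥ (0:ℝ), ‖v s‖ ≤ M * Real.exp (-(2*s)) := by
  intro s hs
  have h1 := h s hs
  have hp := Real.exp_pos (2*s)
  have heq : Real.exp (-(2*s)) * (Real.exp (2*s) * ‖v s‖) = ‖v s‖ := by
    rw [← mul_assoc, ← Real.exp_add]; simp
  calc ‖v s‖ = Real.exp (-(2*s)) * (Real.exp (2*s) * ‖v s‖) := heq.symm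
    _ ≤ Real.exp (-(2*s)) * M := by
        exact mul_le_mul_of_nonneg_left h1 (Real.exp_pos _).le
    _ = M * Real.exp (-(2*s)) := by ring

lemma master_bound (d : ℕ) (hd : 2 ≤ d) (q : ℝ) (x y : Fin 4 → ℝ) (M C a t s : ℝ)
    (ht : 0 ≤ t) (hts : t ≤ s) (hMnn : 0 ≤ M) (_hCnn : 0 ≤ C)
    (hx : ‖x‖ ≤ M * Real.exp (-(2*s))) (hy : ‖y‖ ≤ M * Real.exp (-(2*s)))
    (hxy : ‖x - y‖ ≤ C * Real.exp (-(a*s))) :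
    ‖(Phi d t s).mulVec (bfun d q x - bfun d q y)‖ ≤
      (((d:ℝ)+3) * ((6*(d:ℝ) + 3*|A3 d q| + 3*|2 * A3 d q / (d:ℝ)| + 24) * (M^2+M)) * C)
        * Real.exp (-(2*t)) * Real.exp (-(a*s)) := by
  have hs0 : 0 ≤ s := le_trans ht hts
  set L := 6*(d:ℝ) + 3*|A3 d q| + 3*|2 * A3 d q / (d:ℝ)| + 24 with hLdef
  have hL : 0 ≤ L := by positivity
  set R := M * Real.exp (-(2*s)) with hRdef
  have h1 : ‖bfun d q x - bfun d q y‖ ≤ L * (R^2+R) * ‖x - y‖ := bfun_lip d q x y R hx hy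
  have hexp1 : Real.exp (-(2*s)) ≤ 1 := Real.exp_le_one_iff.mpr (by linarith)
  have hexp0 : (0:ℝ) ≤ Real.exp (-(2*s)) := (Real.exp_pos _).le
  have hR2 : R^2 + R ≤ (M^2+M) * Real.exp (-(2*s)) := by
    rw [hRdef]
    nlinarith [mul_nonneg (mul_nonneg (sq_nonneg M) hexp0) (by linarith : (0:ℝ) ≤ 1 - Real.exp (-(2*s)))]
  have he : Real.exp (2*(s-t)) * Real.exp (-(2*s)) = Real.exp (-(2*t)) := by
    rw [← Real.exp_add]; congr 1; ring
  calc ‖(Phi d t s).mulVec (bfun d q x - bfun d q y)‖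
      ≤ ((d:ℝ)+3) * Real.exp (2*(s-t)) * ‖bfun d q x - bfun d q y‖ :=
        phi_mulVec_bound d hd t s hts _
    _ ≤ ((d:ℝ)+3) * Real.exp (2*(s-t)) * (L * ((M^2+M) * Real.exp (-(2*s))) * (C * Real.exp (-(a*s)))) := by
        refine mul_le_mul_of_nonneg_left (h1.trans ?_) (by positivity)
        exact mul_le_mul (mul_le_mul_of_nonneg_left hR2 hL) hxy (norm_nonneg _) (by positivity)
    _ = (((d:ℝ)+3) * (L * (M^2+M)) * C) * (Real.exp (2*(s-t)) * Real.exp (-(2*s))) * Real.exp (-(a*s)) := by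
        ring
    _ = (((d:ℝ)+3) * (L * (M^2+M)) * C) * Real.exp (-(2*t)) * Real.exp (-(a*s)) := by
        rw [he]

lemma integrable_main (d : ℕ) (hd : 2 ≤ d) (q : ℝ) (v : ℝ → Fin 4 → ℝ) (hv : memV v)
    {t : ℝ} (ht : 0 ≤ t) :
    MeasureTheory.IntegrableOn (fun s => (Phi d t s).mulVec (bfun d q (v s))) (Set.Ioi t) := by
  obtain ⟨hvc, M, hM⟩ := hv
  have hMd := decay_of_bound hM
  have hMnn : 0 ≤ M := le_trans (by positivity) (hM 0 le_rfl)
  have hsub : Set.Ioi t ⊆ Set.Ici (0:ℝ) := fun s hs => le_trans ht (le_of_lt hs)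
  have hvc' : ContinuousOn v (Set.Ioi t) := hvc.mono hsub
  have hbv : ContinuousOn (fun s => bfun d q (v s)) (Set.Ioi t) :=
    (bfun_cont d q).comp_continuousOn hvc'
  have hPhiC : ∀ i j, Continuous fun s => Phi d t s i j := by
    intro i j; fin_cases i <;> fin_cases j <;> simp [Phi] <;> fun_prop
  have hcont : ContinuousOn (fun s => (Phi d t s).mulVec (bfun d q (v s))) (Set.Ioi t) := by
    apply continuousOn_pi.mpr; intro i
    simp only [Matrix.mulVec, dotProduct, Fin.sum_univ_four]
    exact ((((hPhiC i 0).continuousOn.mul ((continuous_apply _).comp_continuousOn hbv)).add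
      ((hPhiC i 1).continuousOn.mul ((continuous_apply _).comp_continuousOn hbv))).add
      ((hPhiC i 2).continuousOn.mul ((continuous_apply _).comp_continuousOn hbv))).add
      ((hPhiC i 3).continuousOn.mul ((continuous_apply _).comp_continuousOn hbv))
  set K := ((d:ℝ)+3) * ((6*(d:ℝ) + 3*|A3 d q| + 3*|2 * A3 d q / (d:ℝ)| + 24) * (M^2+M)) * M
    with hKdef
  have hKnn : 0 ≤ K := by positivity
  refine MeasureTheory.Integrable.mono'
    ((exp_neg_integrableOn_Ioi t (by norm_num : (0:ℝ) < 2)).const_mul K)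
    (hcont.aestronglyMeasurable measurableSet_Ioi) ?_
  rw [MeasureTheory.ae_restrict_iff' measurableSet_Ioi]
  refine MeasureTheory.ae_of_all _ fun s hs => ?_
  have hs' : t ≤ s := le_of_lt hs
  have hs0 : (0:ℝ) ≤ s := le_trans ht hs'
  have hxy : ‖v s - 0‖ ≤ M * Real.exp (-(2*s)) := by simpa using hMd s hs0
  have h := master_bound d hd q (v s) 0 M M 2 t s ht hs' hMnn hMnn (hMd s hs0)
    (by simpa using (by positivity : (0:ℝ) ≤ M * Real.exp (-(2*s)))) hxy
  rw [bfun_zero, sub_zero] at h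
  refine h.trans ?_
  have : Real.exp (-(2*t)) ≤ 1 := Real.exp_le_one_iff.mpr (by linarith)
  calc K * Real.exp (-(2*t)) * Real.exp (-(2*s)) ≤ K * 1 * Real.exp (-(2*s)) := by
        gcongr
    _ = K * Real.exp (-(2*s)) := by ring
    _ = K * Real.exp (-2*s) := by rw [show (-(2*s)) = -2*s by ring]

end Aux

/-- For every `u ∈ 𝕍`, the operator `T_u` has at most one fixed point in `𝕍`. -/
theorem stmt10 (d : ℕ) (hd : 2 ≤ d) (q : ℝ)
    (u : ℝ → Fin 4 → ℝ) (hu : memV u)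
    (v : ℝ → Fin 4 → ℝ) (hv : memV v)
    (vt : ℝ → Fin 4 → ℝ) (hvt : memV vt)
    (hfix1 : ∀ t ≥ (0:ℝ), Tmap d q u v t = v t)
    (hfix2 : ∀ t ≥ (0:ℝ), Tmap d q u vt t = vt t) :
    ∀ t ≥ (0:ℝ), v t = vt t := by
  have hD : (2:ℝ) ≤ (d:ℝ) := by exact_mod_cast hd
  obtain ⟨hvc, Mv, hMv⟩ := hv
  obtain ⟨hvtc, Mvt, hMvt⟩ := hvt
  set M := max Mv Mvt with hMdef
  have hMnnv : 0 ≤ Mv := le_trans (by positivity) (hMv 0 le_rfl)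
  have hMnn : 0 ≤ M := le_trans hMnnv (le_max_left _ _)
  have hdv : ∀ s ≥ (0:ℝ), ‖v s‖ ≤ M * Real.exp (-(2*s)) := fun s hs =>
    (decay_of_bound hMv s hs).trans
      (mul_le_mul_of_nonneg_right (le_max_left _ _) (Real.exp_pos _).le)
  have hdvt : ∀ s ≥ (0:ℝ), ‖vt s‖ ≤ M * Real.exp (-(2*s)) := fun s hs =>
    (decay_of_bound hMvt s hs).trans
      (mul_le_mul_of_nonneg_right (le_max_right _ _) (Real.exp_pos _).le)
  set K := ((d:ℝ)+3) * ((6*(d:ℝ) + 3*|A3 d q| + 3*|2 * A3 d q / (d:ℝ)| + 24) * (M^2+M))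
    with hKdef
  have hKnn : 0 ≤ K := by positivity
  -- a single iteration of the fixed point estimate
  have step : ∀ (C aa : ℝ), 0 ≤ C → 2 ≤ aa →
      (∀ s ≥ (0:ℝ), ‖v s - vt s‖ ≤ C * Real.exp (-(aa*s))) →
      ∀ t ≥ (0:ℝ), ‖v t - vt t‖ ≤ (K*C/aa) * Real.exp (-((aa+2)*t)) := by
    intro C aa hC haa hC' t ht
    have haa0 : (0:ℝ) < aa := lt_of_lt_of_le two_pos haa
    have h1 := hfix1 t ht
    have h2 := hfix2 t ht
    have hiv : MeasureTheory.IntegrableOn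
        (fun s => (Phi d t s).mulVec (bfun d q (v s))) (Set.Ioi t) :=
      integrable_main d hd q v ⟨hvc, Mv, hMv⟩ ht
    have hivt : MeasureTheory.IntegrableOn
        (fun s => (Phi d t s).mulVec (bfun d q (vt s))) (Set.Ioi t) :=
      integrable_main d hd q vt ⟨hvtc, Mvt, hMvt⟩ ht
    have e : v t - vt t = ∫ s in Set.Ioi t,
        ((Phi d t s).mulVec (bfun d q (vt s)) - (Phi d t s).mulVec (bfun d q (v s))) := by
      rw [MeasureTheory.integral_sub hivt hiv, ← h1, ← h2]
      simp only [Tmap]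
      abel
    rw [e]
    refine (MeasureTheory.norm_integral_le_of_norm_le
      (g := fun s => (K*C*Real.exp (-(2*t))) * Real.exp (-(aa*s))) ?_ ?_).trans ?_
    · simpa [neg_mul] using
        ((exp_neg_integrableOn_Ioi t haa0).const_mul (K*C*Real.exp (-(2*t))))
    · rw [MeasureTheory.ae_restrict_iff' measurableSet_Ioi]
      refine MeasureTheory.ae_of_all _ fun s hs => ?_
      have hs' : t ≤ s := le_of_lt hs
      have hs0 : (0:ℝ) ≤ s := le_trans ht hs'
      rw [← Matrix.mulVec_sub]
      have h := master_bound d hd q (vt s) (v s) M C aa t s ht hs' hMnn hC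
        (hdvt s hs0) (hdv s hs0) (by rw [norm_sub_rev]; exact hC' s hs0)
      refine h.trans (le_of_eq ?_)
      rw [hKdef]
    · rw [MeasureTheory.integral_const_mul, integral_exp_neg_mul_Ioi t haa0]
      refine le_of_eq ?_
      have hee : Real.exp (-(2*t)) * Real.exp (-(aa*t)) = Real.exp (-((aa+2)*t)) := by
        rw [← Real.exp_add]; congr 1; ring
      calc K*C*Real.exp (-(2*t)) * (Real.exp (-(aa*t))/aa)
          = (K*C/aa) * (Real.exp (-(2*t)) * Real.exp (-(aa*t))) := by ring
        _ = (K*C/aa) * Real.exp (-((aa+2)*t)) := by rw [hee]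
  -- iterate
  have main : ∀ n : ℕ, ∀ t ≥ (0:ℝ),
      ‖v t - vt t‖ ≤ (2*M*(K/2)^n / (n.factorial : ℝ)) * Real.exp (-((2*(n:ℝ)+2)*t)) := by
    intro n
    induction n with
    | zero =>
      intro t ht
      have hn := norm_sub_le (v t) (vt t)
      have := add_le_add (hdv t ht) (hdvt t ht)
      simp only [pow_zero, Nat.factorial_zero, Nat.cast_one, Nat.cast_zero]
      calc ‖v t - vt t‖ ≤ ‖v t‖ + ‖vt t‖ := hn
        _ ≤ 2*M*Real.exp (-(2*t)) := by linarith
        _ = 2*M*1/1 * Real.exp (-((2*0+2)*t)) := by rw [show -((2*(0:ℝ)+2)*t) = -(2*t) by ring]; ring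
    | succ n ih =>
      intro t ht
      have hnn : (0:ℝ) ≤ 2*M*(K/2)^n / (n.factorial : ℝ) := by positivity
      have h := step (2*M*(K/2)^n / (n.factorial : ℝ)) (2*(n:ℝ)+2) hnn
        (by nlinarith [Nat.cast_nonneg (α := ℝ) n]) ih t ht
      refine h.trans (le_of_eq ?_)
      have hfne : ((n.factorial : ℝ)) ≠ 0 := by positivity
      have hfact : (((n+1).factorial : ℝ)) = ((n:ℝ)+1) * (n.factorial : ℝ) := by
        rw [Nat.factorial_succ]; push_cast; ring
      have harg : -((2*(n:ℝ)+2+2)*t) = -((2*((n:ℝ)+1)+2)*t) := by ring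
      calc K * (2*M*(K/2)^n / (n.factorial : ℝ)) / (2*(n:ℝ)+2) * Real.exp (-((2*(n:ℝ)+2+2)*t))
          = (2*M*(K/2)^(n+1) / (((n+1).factorial : ℝ))) * Real.exp (-((2*(n:ℝ)+2+2)*t)) := by
            rw [hfact]
            field_simp
            ring
        _ = (2*M*(K/2)^(n+1) / (((n+1).factorial : ℝ))) * Real.exp (-((2*((n:ℝ)+1)+2)*t)) := by
            rw [harg]
        _ = (2*M*(K/2)^(n+1) / (((n+1).factorial : ℝ))) * Real.exp (-((2*((n+1 : ℕ):ℝ)+2)*t)) := by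
            push_cast
            ring_nf
  -- conclude
  intro t ht
  have hb : ∀ n : ℕ, ‖v t - vt t‖ ≤ 2*M*(K/2)^n / (n.factorial : ℝ) := by
    intro n
    refine (main n t ht).trans ?_
    have h1 : Real.exp (-((2*(n:ℝ)+2)*t)) ≤ 1 :=
      Real.exp_le_one_iff.mpr (by nlinarith [Nat.cast_nonneg (α := ℝ) n])
    have h2 : (0:ℝ) ≤ 2*M*(K/2)^n / (n.factorial : ℝ) := by positivity
    exact mul_le_of_le_one_right h2 h1
  have hlim : Filter.Tendsto (fun n : ℕ => 2*M*(K/2)^n / (n.factorial : ℝ))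
      Filter.atTop (𝓝 0) := by
    simpa using FloorSemiring.tendsto_mul_pow_div_factorial_sub_atTop (2*M) (K/2) 0
  have hle : ‖v t - vt t‖ ≤ 0 := ge_of_tendsto hlim (Filter.Eventually.of_forall hb)
  have : v t - vt t = 0 := norm_le_zero_iff.mp hle
  exact sub_eq_zero.mp this
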